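/- The adjoint of the q-creation operator c_q(f) on the q-Fock space acts as c_q*(f)Ω = 0 and c_q*(f)(f_1⊗···⊗f_k) = Σ_{j=1}^k q^{j−1}(f_j, f)·f_1⊗···⊗f_{j−1}⊗f_{j+1}⊗···⊗f_k. -/
import Mathlib


open scoped RealInnerProductSpace

/-- The number of inversions of a permutation of `Fin k`. -/
def inversions {k : ℕ} (π : Equiv.Perm (Fin k)) : ℕ :=
  (Finset.univ.filter fun p : Fin k × Fin k => p.1 < p.2 ∧ π p.2 < π p.1).card

/-- The `q`-inner product of two simple tensors of the same degree over a real Hilbert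
space: `(f_1⊗···⊗f_k, g_1⊗···⊗g_k)_q = Σ_{π ∈ S_k} q^{ι(π)} Π_i (f_i, g_{π(i)})`. -/
noncomputable def qForm {H : Type*} [NormedAddCommGroup H] [InnerProductSpace ℝ H]
    (q : ℝ) {k : ℕ} (f g : Fin k → H) : ℝ :=
  ∑ π : Equiv.Perm (Fin k), q ^ inversions π * ∏ i : Fin k, ⟪f i, g (π i)⟫

/-- Remove the `j`-th entry of a tuple. -/
def removeAt {H : Type*} {k : ℕ} (j : Fin k) (φ : Fin k → H) : Fin (k - 1) → H :=
  fun i =>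
    if h : (i : ℕ) < (j : ℕ) then φ ⟨i, by omega⟩
    else φ ⟨(i : ℕ) + 1, by have := i.isLt; omega⟩

def E {k : ℕ} (j : Fin (k+1)) (σ : Equiv.Perm (Fin k)) : Equiv.Perm (Fin (k+1)) :=
  (finSuccEquiv k).trans (σ.optionCongr.trans (finSuccEquiv' j).symm)

@[simp] lemma E_zero {k : ℕ} (j : Fin (k+1)) (σ : Equiv.Perm (Fin k)) : E j σ 0 = j := by
  simp [E]

@[simp] lemma E_succ {k : ℕ} (j : Fin (k+1)) (σ : Equiv.Perm (Fin k)) (i : Fin k) :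
    E j σ i.succ = j.succAbove (σ i) := by
  simp [E]

lemma E_bij {k : ℕ} :
    Function.Bijective (fun p : Fin (k+1) × Equiv.Perm (Fin k) => E p.1 p.2) := by
  rw [Fintype.bijective_iff_injective_and_card]
  constructor
  · rintro ⟨j, σ⟩ ⟨j', σ'⟩ h
    simp only at h
    have hj : j = j' := by
      have := congrArg (fun π : Equiv.Perm (Fin (k+1)) => π 0) h
      simpa using this
    subst hj
    refine Prod.ext rfl (Equiv.ext fun i => ?_)
    have := congrArg (fun π : Equiv.Perm (Fin (k+1)) => π i.succ) h
    simp only [E_succ] at this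
    exact Fin.succAbove_right_injective this
  · simp [Fintype.card_perm, Nat.factorial_succ]

lemma succAbove_lt_self_iff {k : ℕ} (j : Fin (k+1)) (m : Fin k) :
    j.succAbove m < j ↔ (m : ℕ) < (j : ℕ) := by
  rcases lt_or_ge (m.castSucc) j with h | h
  · rw [Fin.succAbove_of_castSucc_lt _ _ h]
    simpa [Fin.lt_def] using h
  · rw [Fin.succAbove_of_le_castSucc _ _ h]
    simp only [Fin.lt_def, Fin.val_succ]
    have := h
    rw [Fin.le_def] at this
    simp at this ⊢
    omega

lemma card_lt_j {k : ℕ} (j : Fin (k+1)) :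
    (Finset.univ.filter fun m : Fin k => (m : ℕ) < (j : ℕ)).card = (j : ℕ) := by
  have hj : (j : ℕ) ≤ k := by omega
  conv_rhs => rw [← Finset.card_range (j : ℕ)]
  refine Finset.card_bij (fun m _ => (m : ℕ)) ?_ ?_ ?_
  · intro a ha; simp only [Finset.mem_filter] at ha; simp [ha.2]
  · intro a _ b _ h; exact Fin.val_injective h
  · intro b hb
    simp only [Finset.mem_range] at hb
    exact ⟨⟨b, by omega⟩, by simp [hb], rfl⟩

lemma inversions_E {k : ℕ} (j : Fin (k+1)) (σ : Equiv.Perm (Fin k)) :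
    inversions (E j σ) = (j : ℕ) + inversions σ := by
  unfold inversions
  rw [Finset.card_filter, Finset.card_filter, Fintype.sum_prod_type, Fintype.sum_prod_type]
  simp only [Fin.sum_univ_succ, E_zero, E_succ, lt_irrefl, false_and, if_false,
    Fin.succ_pos, true_and, Fin.not_lt_zero, and_false, Fin.succ_lt_succ_iff,
    Fin.succAbove_lt_succAbove_iff, succAbove_lt_self_iff, zero_add, if_true]
  congr 1
  rw [Equiv.sum_comp σ (fun m : Fin k => if (m : ℕ) < (j : ℕ) then 1 else 0),
    ← Finset.card_filter, card_lt_j]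

lemma removeAt_succAbove {H : Type*} {k : ℕ} (j : Fin (k+1)) (ψ : Fin (k+1) → H) (m : Fin k) :
    removeAt j ψ m = ψ (j.succAbove m) := by
  unfold removeAt
  split_ifs with h
  · rw [Fin.succAbove_of_castSucc_lt _ _ (by simpa [Fin.lt_def] using h)]
    rfl
  · rw [Fin.succAbove_of_le_castSucc _ _ (by simp [Fin.le_def]; omega)]
    rfl


/-- The adjoint of the `q`-creation operator `c_q(f)` (prepending the tensor factor `f`)
on the `q`-Fock space acts as
`c_q*(f)(g_1⊗···⊗g_{k+1}) = Σ_{j=1}^{k+1} q^{j−1}(g_j, f)·g_1⊗···⊗ĝ_j⊗···⊗g_{k+1}`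
(and `c_q*(f)Ω = 0`): that is, pairing against any simple tensor,
`(c_q(f)(φ_1⊗⋯⊗φ_k), ψ_1⊗⋯⊗ψ_{k+1})_q = Σ_j q^{j−1}(ψ_j, f)·(φ, ψ_ĵ)_q`.
(The vacuum part `c_q*(f)Ω = 0` corresponds to the degree-0 pairing
`(c_q(f)Ω, ψ_1)_q = (ψ_1, f)(Ω, Ω)_q`, the `k = 0` case of the identity.) -/
theorem creation_adjoint_formula {H : Type*} [NormedAddCommGroup H]
    [InnerProductSpace ℝ H] (q : ℝ) (hq1 : -1 < q) (hq2 : q < 1)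
    (f : H) (k : ℕ) (φ : Fin k → H) (ψ : Fin (k + 1) → H) :
    qForm q (Fin.cons f φ) ψ
      = ∑ j : Fin (k + 1), q ^ (j : ℕ) * ⟪ψ j, f⟫ * qForm q φ (removeAt j ψ) := by
  unfold qForm
  rw [← Fintype.sum_bijective (fun p : Fin (k+1) × Equiv.Perm (Fin k) => E p.1 p.2) E_bij
    _ _ (fun p => rfl), Fintype.sum_prod_type]
  refine Finset.sum_congr rfl fun j _ => ?_
  rw [Finset.mul_sum]
  refine Finset.sum_congr rfl fun σ _ => ?_
  rw [inversions_E, pow_add, Fin.prod_univ_succ]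
  simp only [E_zero, E_succ, Fin.cons_zero, Fin.cons_succ, removeAt_succAbove]
  rw [real_inner_comm f (ψ j)]
  ring
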